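/- Suppose ρ([(b-1)/b, 1]) > 1/b. Then for every v > 1 - x_*, the avalanche is infinite with positive probability: P_ρ(|A^{(v)}| = ∞) > 0. -/

import Mathlib

open MeasureTheory ProbabilityTheory Filter Set
open scoped Classical ENNReal NNReal ENat

namespace OrgCrit

/-- Vertices of the rooted `b`-ary tree: finite sequences over `Fin b`,
with the root `[]`; the parent of a nonempty sequence is its `tail`
(the head being the deepest coordinate). -/
abbrev V (b : ℕ) := List (Fin b)

/-- One step of the avalanche dynamics. -/
noncomputable def nextConf (b : ℕ) (f : V b → ℝ) : V b → ℝ := fun σ =>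
  match σ with
  | [] => if 1 ≤ f [] then 0 else f []
  | _ :: l => if 1 ≤ f l then f σ + f l / (b : ℝ)
      else if 1 ≤ f σ then 0 else f σ

/-- The avalanche process `X^{(v)}(t)` started from configuration `x` with `v` added
at the root. -/
noncomputable def conf (b : ℕ) (x : V b → ℝ) (v : ℝ) : ℕ → V b → ℝ
  | 0 => fun σ => if σ = [] then x [] + v else x σ
  | t + 1 => nextConf b (conf b x v t)

/-- The avalanche set `A^{(v)}`. -/
def avalSet (b : ℕ) (x : V b → ℝ) (v : ℝ) : Set (V b) :=
  {σ | ∃ t, conf b x v t σ = 0 ∧ ∃ s < t, conf b x v s σ ≠ 0}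

/-- `x_* = sup {y ∈ [0,1] : ρ([y,1]) > 0}`. -/
noncomputable def xStar (ρ : Measure ℝ) : ℝ :=
  sSup {y : ℝ | y ∈ Set.Icc (0 : ℝ) 1 ∧ 0 < ρ (Set.Icc y 1)}

/-- `θ_b = b x_* / (b-1)`. -/
noncomputable def thetaB (b : ℕ) (ρ : Measure ℝ) : ℝ := (b : ℝ) * xStar ρ / ((b : ℝ) - 1)

/-- `Q_n^{(θ)}` built from the sequence `x` (`X_k = x k`, indexed from 1). -/
noncomputable def Qseq (b : ℕ) (θ : ℝ) (x : ℕ → ℝ) : ℕ → ℝ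
  | 0 => θ
  | n + 1 => x (n + 1) + Qseq b θ x n / (b : ℝ)

/-- `Z_n(θ) = P(Q_k^{(θ)} ≥ 1, k = 0,…,n)`. -/
noncomputable def Zfun (b : ℕ) (P : Measure (ℕ → ℝ)) (n : ℕ) (θ : ℝ) : ℝ :=
  (P {x | ∀ k ≤ n, 1 ≤ Qseq b θ x k}).toReal

/-- `Q_{n,k}^{(θ)} = Y_k + Y_{k+1}/b + … + Y_n/b^{n-k} + θ/b^{n-k+1}` (`Y_i = y i`). -/
noncomputable def Qnk (b : ℕ) (θ : ℝ) (y : ℕ → ℝ) (n k : ℕ) : ℝ :=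
  (∑ j ∈ Finset.range (n - k + 1), y (k + j) / (b : ℝ) ^ j) + θ / (b : ℝ) ^ (n - k + 1)

/-- The conditional law `P_n^{(θ)} = P( · | Q_{n,ℓ}^{(θ)} ≥ 1, ℓ = 2,…,n)`. -/
noncomputable def PnTheta (b : ℕ) (P : Measure (ℕ → ℝ)) (n : ℕ) (θ : ℝ) : Measure (ℕ → ℝ) :=
  ProbabilityTheory.cond P {y | ∀ ℓ, 2 ≤ ℓ → ℓ ≤ n → 1 ≤ Qnk b θ y n ℓ}

/-- `Q_∞ = ∑_{k ≥ 1} Y_k b^{-(k-1)}`. -/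
noncomputable def Qinf (b : ℕ) (y : ℕ → ℝ) : ℝ := ∑' k : ℕ, y (k + 1) / (b : ℝ) ^ k

/-- `Φ_b(y) = 1 - (1-y)^b`. -/
noncomputable def Phib (b : ℕ) (y : ℝ) : ℝ := 1 - (1 - y) ^ b

/-- `V_n`, the least addition at the root making the avalanche survive `n` steps. -/
noncomputable def Vmin (b : ℕ) (x : V b → ℝ) (n : ℕ) : ℝ :=
  sInf {v : ℝ | 0 < v ∧ ∀ t < n, conf b x v (t + 1) ≠ conf b x v t}

/-- `Ψ_n(ϑ)`, the distribution function of `V_n` (with `Ψ_0 = 1_{ϑ ≥ 0}`). -/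
noncomputable def Psi (b : ℕ) (P : Measure (V b → ℝ)) (n : ℕ) (ϑ : ℝ) : ℝ :=
  if n = 0 then (if 0 ≤ ϑ then 1 else 0) else (P {x | Vmin b x n ≤ ϑ}).toReal

/-- Bernoulli law on `Bool` with success probability `l`. -/
noncomputable def bern (l : ℝ) : Measure Bool :=
  ENNReal.ofReal l • Measure.dirac true + ENNReal.ofReal (1 - l) • Measure.dirac false

/-- The avalanche set `A^{(θ - X_∅)}` of the avalanche started with total value `θ`
at the root, with the convention that it is empty whenever `θ < 1`. -/
noncomputable def avalSetTheta (b : ℕ) (x : V b → ℝ) (θ : ℝ) : Set (V b) :=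
  if θ < 1 then ∅ else avalSet b x (θ - x [])

/-- `B^{(θ)}`: equal to `{∅}` if `A^{(θ-X_∅)} = ∅`, and to `{σ : m(σ) ∈ A^{(θ-X_∅)}}`
otherwise. -/
noncomputable def Bset (b : ℕ) (x : V b → ℝ) (θ : ℝ) : Set (V b) :=
  if avalSetTheta b x θ = ∅ then {([] : V b)}
  else {σ : V b | σ ≠ [] ∧ σ.tail ∈ avalSetTheta b x θ}

/-- `B_∞(θ, λ) = P_{ρ,λ}(B^{(θ)} ∩ G ≠ ∅)`, where the first component of the coordinate
at `σ` is `X_σ` and the second one indicates whether `σ` is green. -/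
noncomputable def Binfty (b : ℕ) (PJ : Measure (V b → ℝ × Bool)) (θ : ℝ) : ℝ :=
  (PJ {ω | ∃ σ ∈ Bset b (fun τ => (ω τ).1) θ, (ω σ).2 = true}).toReal

/-- The coordinates of `P` (a measure on `ℕ → ℝ`) are i.i.d. with law `ρ`. -/
def IsProjIID (ρ : Measure ℝ) (P : Measure (ℕ → ℝ)) : Prop :=
  IsProbabilityMeasure P ∧
  iIndepFun (m := fun _ : ℕ => (inferInstance : MeasurableSpace ℝ)) (fun i (x : ℕ → ℝ) => x i) P ∧
  ∀ i : ℕ, Measure.map (fun x : ℕ → ℝ => x i) P = ρ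

/-- The coordinates of `P` (a measure on configurations on the tree) are i.i.d. with
law `ρ`. -/
def IsTreeIID (b : ℕ) (ρ : Measure ℝ) (P : Measure (V b → ℝ)) : Prop :=
  IsProbabilityMeasure P ∧
  iIndepFun (m := fun _ : V b => (inferInstance : MeasurableSpace ℝ)) (fun σ (x : V b → ℝ) => x σ) P ∧
  ∀ σ : V b, Measure.map (fun x : V b → ℝ => x σ) P = ρ

/-- Joint law of the values and of the green sites: the coordinates are i.i.d., each with
law `ρ ⊗ Bernoulli(l)`. -/
def IsTreeGreenIID (b : ℕ) (ρ : Measure ℝ) (l : ℝ) (P : Measure (V b → ℝ × Bool)) : Prop :=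
  IsProbabilityMeasure P ∧
  iIndepFun (m := fun _ : V b => (inferInstance : MeasurableSpace (ℝ × Bool)))
    (fun σ (ω : V b → ℝ × Bool) => ω σ) P ∧
  ∀ σ : V b, Measure.map (fun ω : V b → ℝ × Bool => ω σ) P = ρ.prod (bern l)

/-- `z` is the common value of `lim_n Z_n(θ)^{1/n}` over `θ ≥ 1`. -/
def IsZlim (b : ℕ) (P : Measure (ℕ → ℝ)) (z : ℝ) : Prop :=
  ∀ θ : ℝ, 1 ≤ θ →
    Tendsto (fun n : ℕ => Zfun b P n θ ^ (1 / (n : ℝ))) atTop (nhds z)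

/-- `ψ θ = lim_n Z_n(θ) z^{-n}` for all `θ ≥ 0`. -/
def IsPsiFun (b : ℕ) (P : Measure (ℕ → ℝ)) (z : ℝ) (ψ : ℝ → ℝ) : Prop :=
  ∀ θ : ℝ, 0 ≤ θ →
    Tendsto (fun n : ℕ => Zfun b P n θ / z ^ n) atTop (nhds (ψ θ))

/-- `Phat` is the limit of `P_n^{(θ)}` (tested on bounded measurable functions of
finitely many coordinates), independently of `θ ≥ 1`. -/
def IsLawQhat (b : ℕ) (P : Measure (ℕ → ℝ)) (Phat : Measure (ℕ → ℝ)) : Prop :=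
  IsProbabilityMeasure Phat ∧
  ∀ θ : ℝ, 1 ≤ θ → ∀ k : ℕ, ∀ f : (ℕ → ℝ) → ℝ, Measurable f →
    (∃ M : ℝ, ∀ y, |f y| ≤ M) →
    (∀ y y' : ℕ → ℝ, (∀ i, 1 ≤ i → i ≤ k → y i = y' i) → f y = f y') →
    Tendsto (fun n : ℕ => ∫ y, f y ∂(PnTheta b P n θ)) atTop (nhds (∫ y, f y ∂Phat))

/-- The class `M♭`: probability measures on `[0,1]`, absolutely continuous with a bounded
density w.r.t. Lebesgue measure, giving positive mass to `[1 - 1/b, 1]`. -/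
def MFlat (b : ℕ) (ρ : Measure ℝ) : Prop :=
  IsProbabilityMeasure ρ ∧ ρ ((Set.Icc (0 : ℝ) 1)ᶜ) = 0 ∧
  (∃ C : NNReal, ∀ s : Set ℝ, ρ s ≤ C * volume s) ∧
  0 < ρ (Set.Icc (1 - 1 / (b : ℝ)) 1)

/-- The defining property of `c_ρ`. -/
def IsCrho (b : ℕ) (ρ : Measure ℝ) (Phat : Measure (ℕ → ℝ)) (ψ : ℝ → ℝ) (c : ℝ) : Prop :=
  0 < c ∧
  1 / c ^ 2 = ((b : ℝ) - 1) / 2 *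
    ∫ y, (∫ x, ψ (x + Qinf b y / (b : ℝ)) ∂ρ) ^ 2
      ∂(ProbabilityTheory.cond Phat {y | 1 ≤ Qinf b y})

/-- `Q_σ^{(θ)}` on the tree: `Q_∅ = θ`, `Q_σ = X_σ + Q_{m(σ)}/b`. -/
noncomputable def treeQ (b : ℕ) (θ : ℝ) (x : V b → ℝ) : V b → ℝ
  | [] => θ
  | a :: l => x (a :: l) + treeQ b θ x l / (b : ℝ)



/-- vertex at depth m along the ray w -/
def vtx (b : ℕ) (w : ℕ → Fin b) : ℕ → V b
  | 0 => []
  | m + 1 => w m :: vtx b w m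

section Det

variable {b : ℕ} {x : V b → ℝ} {v : ℝ}

lemma conf_zero (σ : V b) : conf b x v 0 σ = if σ = ([]) then x ([]) + v else x σ := rfl

lemma conf_succ_nil (t : ℕ) :
    conf b x v (t+1) ([]) = if 1 ≤ conf b x v t ([]) then 0 else conf b x v t ([]) := rfl

lemma conf_succ_cons (t : ℕ) (a : Fin b) (l : V b) :
    conf b x v (t+1) (a :: l) =
      if 1 ≤ conf b x v t l then conf b x v t (a :: l) + conf b x v t l / (b : ℝ)
      else if 1 ≤ conf b x v t (a :: l) then 0 else conf b x v t (a :: l) := rfl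

lemma conf_nonneg (hb : 0 < b) (hx : ∀ σ, 0 ≤ x σ) (hv : 0 ≤ v) :
    ∀ t σ, 0 ≤ conf b x v t σ := by
  intro t
  induction t with
  | zero =>
    intro σ
    rw [conf_zero]
    split
    · have := hx ([] : V b); linarith
    · exact hx σ
  | succ t ih =>
    intro σ
    match σ with
    | ([]) =>
      rw [conf_succ_nil]
      split
      · exact le_refl 0
      · exact ih ([])
    | a :: l =>
      rw [conf_succ_cons]
      have hbr : (0:ℝ) < b := by exact_mod_cast hb
      have h1 := ih l
      have h2 := ih (a :: l)
      split
      · positivity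
      · split
        · exact le_refl 0
        · exact h2

lemma freeze (σ : V b) :
    ∃ T, conf b x v T σ < 1 ∧ ∀ t, T ≤ t → conf b x v t σ = conf b x v T σ := by
  induction σ with
  | nil =>
    have h1 : conf b x v 1 ([]) < 1 := by
      rw [conf_succ_nil]
      split
      · norm_num
      · next h => linarith [not_le.mp h]
    refine ⟨1, h1, ?_⟩
    intro t ht
    induction t with
    | zero => omega
    | succ t iht =>
      rcases Nat.lt_or_ge 1 (t+1) with h | h
      · have he := iht (by omega)
        rw [conf_succ_nil, he, if_neg (by linarith)]
      · have : t + 1 = 1 := by omega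
        rw [this]
  | cons a l ihl =>
    obtain ⟨T, hT1, hT2⟩ := ihl
    have key : ∀ t, T ≤ t → conf b x v (t+1) (a :: l)
        = if 1 ≤ conf b x v t (a :: l) then 0 else conf b x v t (a :: l) := by
      intro t ht
      rw [conf_succ_cons, if_neg (by rw [hT2 t ht]; linarith)]
    have hlt : conf b x v (T+1) (a :: l) < 1 := by
      rw [key T le_rfl]
      split
      · norm_num
      · next h => linarith [not_le.mp h]
    refine ⟨T+1, hlt, ?_⟩
    intro t ht
    induction t with
    | zero => omega
    | succ t iht =>
      rcases Nat.lt_or_ge (T+1) (t+1) with h | h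
      · have he := iht (by omega)
        rw [key t (by omega), he, if_neg (by linarith)]
      · have : t + 1 = T + 1 := by omega
        rw [this]

lemma mem_avalSet_of_ge_one (hb : 0 < b) (hx : ∀ σ, 0 ≤ x σ) (hv : 0 ≤ v) {σ : V b}
    (h : ∃ s, 1 ≤ conf b x v s σ) : σ ∈ avalSet b x v := by
  obtain ⟨s, hs⟩ := h
  match σ with
  | ([]) =>
    refine ⟨s+1, ?_, s, by omega, by intro h0; rw [h0] at hs; linarith⟩
    rw [conf_succ_nil, if_pos hs]
  | a :: l =>
    obtain ⟨T, hT1, hT2⟩ := freeze (x := x) (v := v) l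
    have claim : ∀ t, s ≤ t →
        (1 ≤ conf b x v t (a :: l) ∨ ∃ u, s < u ∧ conf b x v u (a :: l) = 0) := by
      intro t ht
      induction t with
      | zero =>
        have hs0 : s = 0 := by omega
        left; rwa [hs0] at hs
      | succ t iht =>
        rcases Nat.lt_or_ge s (t+1) with h' | h'
        · rcases iht (by omega) with h1 | h1
          · by_cases hl : 1 ≤ conf b x v t l
            · left
              rw [conf_succ_cons, if_pos hl]
              have hl0 := conf_nonneg hb hx hv t l
              have hbr : (0:ℝ) < b := by exact_mod_cast hb
              have : 0 ≤ conf b x v t l / (b:ℝ) := by positivity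
              linarith
            · right
              exact ⟨t+1, by omega, by rw [conf_succ_cons, if_neg hl, if_pos h1]⟩
          · right; exact h1
        · have hts : t + 1 = s := by omega
          left; rwa [hts]
    rcases claim (max s T) (le_max_left _ _) with h1 | h1
    · have h0 : conf b x v (max s T + 1) (a :: l) = 0 := by
        rw [conf_succ_cons, if_neg (by rw [hT2 _ (le_max_right _ _)]; linarith), if_pos h1]
      exact ⟨max s T + 1, h0, s, by omega, by intro h0'; rw [h0'] at hs; linarith⟩
    · obtain ⟨u, hu1, hu2⟩ := h1
      exact ⟨u, hu2, s, hu1, by intro h0'; rw [h0'] at hs; linarith⟩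

lemma conf_ge_init (hb : 0 < b) (hx : ∀ σ, 0 ≤ x σ) (hv : 0 ≤ v) (σ : V b) :
    ∀ t, (∃ u, u ≤ t ∧ 1 ≤ conf b x v u σ) ∨ conf b x v 0 σ ≤ conf b x v t σ := by
  intro t
  induction t with
  | zero => right; exact le_rfl
  | succ t ih =>
    rcases ih with ⟨u, hu, h1⟩ | h
    · left; exact ⟨u, by omega, h1⟩
    · match σ with
      | ([]) =>
        by_cases h1 : 1 ≤ conf b x v t ([])
        · left; exact ⟨t, by omega, h1⟩
        · right; rw [conf_succ_nil, if_neg h1]; exact h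
      | a :: l =>
        by_cases hl : 1 ≤ conf b x v t l
        · right
          rw [conf_succ_cons, if_pos hl]
          have hl0 := conf_nonneg hb hx hv t l
          have hbr : (0:ℝ) < b := by exact_mod_cast hb
          have : 0 ≤ conf b x v t l / (b:ℝ) := by positivity
          linarith
        · by_cases h1 : 1 ≤ conf b x v t (a :: l)
          · left; exact ⟨t, by omega, h1⟩
          · right; rw [conf_succ_cons, if_neg hl, if_neg h1]; exact h

lemma chain (hb : 2 ≤ b) (hx : ∀ σ, 0 ≤ x σ) (hv : 0 ≤ v) (hroot : 1 ≤ x ([]) + v)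
    (w : ℕ → Fin b) (n : ℕ) (hw : ∀ m < n, ((b:ℝ)-1)/(b:ℝ) ≤ x (vtx b w (m+1))) :
    ∀ m ≤ n, ∃ u, 1 ≤ conf b x v u (vtx b w m) := by
  have hb0 : 0 < b := by omega
  have hbr : (0:ℝ) < b := by
    have : (2:ℝ) ≤ b := by exact_mod_cast hb
    linarith
  intro m
  induction m with
  | zero => intro _; exact ⟨0, by rw [vtx, conf_zero, if_pos rfl]; exact hroot⟩
  | succ m ih =>
    intro hmn
    obtain ⟨u, hu⟩ := ih (by omega)
    rcases conf_ge_init hb0 hx hv (vtx b w (m+1)) u with ⟨u', _, h1⟩ | h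
    · exact ⟨u', h1⟩
    · refine ⟨u + 1, ?_⟩
      have hm : vtx b w (m+1) = w m :: vtx b w m := rfl
      rw [hm, conf_succ_cons, if_pos hu, ← hm]
      have h0 : conf b x v 0 (vtx b w (m+1)) = x (vtx b w (m+1)) := by
        rw [conf_zero, if_neg (by simp [vtx])]
      have hxw := hw m (by omega)
      have hdiv : 1 / (b:ℝ) ≤ conf b x v u (vtx b w m) / (b:ℝ) := by gcongr
      have hone : ((b:ℝ)-1)/(b:ℝ) + 1/(b:ℝ) = 1 := by field_simp; ring
      rw [h0] at h
      linarith

lemma vtx_length (w : ℕ → Fin b) : ∀ m, (vtx b w m).length = m := by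
  intro m; induction m with
  | zero => rfl
  | succ m ih => simp [vtx, ih]

lemma aval_infinite (hb : 2 ≤ b) (hx : ∀ σ, 0 ≤ x σ) (hv : 0 ≤ v)
    (hpaths : ∀ n : ℕ, ∃ w : ℕ → Fin b, 1 - v < x ([]) ∧
      ∀ m < n, ((b:ℝ)-1)/(b:ℝ) ≤ x (vtx b w (m+1))) :
    (avalSet b x v).Infinite := by
  have hb0 : 0 < b := by omega
  have key : ∀ n : ℕ, ∃ σ ∈ avalSet b x v, σ.length = n := by
    intro n
    obtain ⟨w, hr, hw⟩ := hpaths n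
    have hroot : 1 ≤ x ([]) + v := by linarith
    obtain ⟨u, hu⟩ := chain hb hx hv hroot w n hw n le_rfl
    exact ⟨vtx b w n, mem_avalSet_of_ge_one hb0 hx hv ⟨u, hu⟩, vtx_length w n⟩
  choose f hf hlen using key
  apply Set.infinite_of_injective_forall_mem (f := f) _ hf
  intro m n hmn
  have := congrArg List.length hmn
  rw [hlen m, hlen n] at this
  exact this

end Det

section Prob

variable {b : ℕ}

lemma vtx_ne_nil (w : ℕ → Fin b) (m : ℕ) : vtx b w (m+1) ≠ ([]) := by simp [vtx]

lemma vtx_inj_depth {w w' : ℕ → Fin b} {m m' : ℕ} (h : vtx b w m = vtx b w' m') : m = m' := by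
  have := congrArg List.length h
  rwa [vtx_length, vtx_length] at this

lemma vtx_eq_iff (w w' : ℕ → Fin b) : ∀ m, (vtx b w m = vtx b w' m ↔ ∀ i < m, w i = w' i) := by
  intro m
  induction m with
  | zero => simp [vtx]
  | succ m ih =>
    constructor
    · intro h i hi
      rw [vtx, vtx, List.cons_eq_cons] at h
      rcases Nat.lt_or_ge i m with h' | h'
      · exact (ih.1 h.2) i h'
      · have : i = m := by omega
        rw [this]; exact h.1
    · intro h
      rw [vtx, vtx, List.cons_eq_cons]
      exact ⟨h m (by omega), ih.2 fun i hi => h i (by omega)⟩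

/-- the coordinate constraint sets -/
noncomputable def Sset (b : ℕ) (v : ℝ) : V b → Set ℝ := fun τ =>
  if τ = ([]) then Set.Ioi (1 - v) else Set.Ici (((b:ℝ)-1)/(b:ℝ))

lemma Sset_nil (v : ℝ) : Sset b v ([]) = Set.Ioi (1 - v) := by simp [Sset]

lemma Sset_ne (v : ℝ) {τ : V b} (h : τ ≠ ([])) :
    Sset b v τ = Set.Ici (((b:ℝ)-1)/(b:ℝ)) := by simp [Sset, h]

lemma Sset_meas (v : ℝ) (τ : V b) : MeasurableSet (Sset b v τ) := by
  unfold Sset; split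
  · exact measurableSet_Ioi
  · exact measurableSet_Ici

noncomputable def coordset (b : ℕ) (w : ℕ → Fin b) (n : ℕ) : Finset (V b) :=
  insert ([]) ((Finset.range n).image (fun m => vtx b w (m+1)))

def Gset (b : ℕ) (v : ℝ) (w : ℕ → Fin b) (n : ℕ) : Set (V b → ℝ) :=
  ⋂ τ ∈ coordset b w n, (fun x : V b → ℝ => x τ) ⁻¹' Sset b v τ

lemma Gset_meas (v : ℝ) (w : ℕ → Fin b) (n : ℕ) : MeasurableSet (Gset b v w n) := by
  apply MeasurableSet.biInter ((coordset b w n : Set (V b)).to_countable)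
  exact fun τ _ => measurable_pi_apply τ (Sset_meas v τ)

lemma mem_Gset_iff {v : ℝ} {w : ℕ → Fin b} {n : ℕ} {x : V b → ℝ} :
    x ∈ Gset b v w n ↔
      (1 - v < x ([]) ∧ ∀ m < n, ((b:ℝ)-1)/(b:ℝ) ≤ x (vtx b w (m+1))) := by
  constructor
  · intro h
    have h' := Set.mem_iInter₂.1 h
    constructor
    · have := h' ([]) (Finset.mem_insert_self _ _)
      rwa [Set.mem_preimage, Sset_nil] at this
    · intro m hm
      have hmem : vtx b w (m+1) ∈ coordset b w n := by
        apply Finset.mem_insert_of_mem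
        exact Finset.mem_image.2 ⟨m, Finset.mem_range.2 hm, rfl⟩
      have := h' _ hmem
      rwa [Set.mem_preimage, Sset_ne v (vtx_ne_nil w m)] at this
  · intro ⟨h1, h2⟩
    apply Set.mem_iInter₂.2
    intro τ hτ
    rcases Finset.mem_insert.1 hτ with h | h
    · rw [h, Set.mem_preimage, Sset_nil]; exact h1
    · obtain ⟨m, hm, rfl⟩ := Finset.mem_image.1 h
      rw [Set.mem_preimage, Sset_ne v (vtx_ne_nil w m)]
      exact h2 m (Finset.mem_range.1 hm)

lemma meas_iInter_coords {ρ : Measure ℝ} {P : Measure (V b → ℝ)} (hP : IsTreeIID b ρ P)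
    (v : ℝ) (t : Finset (V b)) :
    P (⋂ τ ∈ t, (fun x : V b → ℝ => x τ) ⁻¹' Sset b v τ) = ∏ τ ∈ t, ρ (Sset b v τ) := by
  rw [hP.2.1.measure_inter_preimage_eq_mul t (sets := fun τ => Sset b v τ)
    (fun τ _ => Sset_meas v τ)]
  refine Finset.prod_congr rfl fun τ _ => ?_
  rw [← hP.2.2 τ, Measure.map_apply (measurable_pi_apply τ) (Sset_meas v τ)]

lemma nil_not_mem_image (w : ℕ → Fin b) (s : Finset ℕ) :
    ([]) ∉ s.image (fun m => vtx b w (m+1)) := by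
  simp only [Finset.mem_image, not_exists, not_and]
  exact fun m _ => vtx_ne_nil w m

lemma prod_Sset_range (ρ : Measure ℝ) (v : ℝ) (w : ℕ → Fin b) (n : ℕ) :
    ∏ m ∈ Finset.range n, ρ (Sset b v (vtx b w (m+1)))
      = ρ (Set.Ici (((b:ℝ)-1)/(b:ℝ))) ^ n := by
  calc ∏ m ∈ Finset.range n, ρ (Sset b v (vtx b w (m+1)))
      = ∏ _m ∈ Finset.range n, ρ (Set.Ici (((b:ℝ)-1)/(b:ℝ))) :=
        Finset.prod_congr rfl fun m _ => by rw [Sset_ne v (vtx_ne_nil w m)]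
    _ = _ := by rw [Finset.prod_const, Finset.card_range]

lemma meas_Gset {ρ : Measure ℝ} {P : Measure (V b → ℝ)} (hP : IsTreeIID b ρ P)
    (v : ℝ) (w : ℕ → Fin b) (n : ℕ) :
    P (Gset b v w n)
      = ρ (Set.Ioi (1 - v)) * ρ (Set.Ici (((b:ℝ)-1)/(b:ℝ))) ^ n := by
  rw [Gset, meas_iInter_coords hP, coordset,
    Finset.prod_insert (nil_not_mem_image w _),
    Finset.prod_image (fun m _ m' _ h => by have := vtx_inj_depth h; omega)]
  congr 1
  exact prod_Sset_range ρ v w n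

/-- agreement levels -/
noncomputable def agrF (b : ℕ) (w w' : ℕ → Fin b) (n : ℕ) : Finset ℕ :=
  (Finset.range n).filter (fun m => vtx b w (m+1) = vtx b w' (m+1))

lemma agrF_card_le (w w' : ℕ → Fin b) (n : ℕ) : (agrF b w w' n).card ≤ n := by
  have := Finset.card_le_card (Finset.filter_subset (fun m => vtx b w (m+1) = vtx b w' (m+1)) (Finset.range n))
  rwa [Finset.card_range] at this

lemma meas_Gset_inter_le {ρ : Measure ℝ} {P : Measure (V b → ℝ)} (hP : IsTreeIID b ρ P)
    (v : ℝ) (w w' : ℕ → Fin b) (n : ℕ) :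
    P (Gset b v w n ∩ Gset b v w' n)
      ≤ ρ (Set.Ioi (1 - v)) * ρ (Set.Ici (((b:ℝ)-1)/(b:ℝ))) ^ n
          * ρ (Set.Ici (((b:ℝ)-1)/(b:ℝ))) ^ (n - (agrF b w w' n).card) := by
  classical
  set D : Finset ℕ := Finset.range n \ agrF b w w' n with hD
  set t' : Finset (V b) := coordset b w n ∪ D.image (fun m => vtx b w' (m+1)) with ht'
  have hsub : Gset b v w n ∩ Gset b v w' n ⊆
      ⋂ τ ∈ t', (fun x : V b → ℝ => x τ) ⁻¹' Sset b v τ := by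
    intro x hx
    apply Set.mem_iInter₂.2
    intro τ hτ
    rcases Finset.mem_union.1 hτ with h | h
    · exact Set.mem_iInter₂.1 hx.1 τ h
    · obtain ⟨m, hm, rfl⟩ := Finset.mem_image.1 h
      have hm' : m ∈ Finset.range n := (Finset.mem_sdiff.1 hm).1
      exact Set.mem_iInter₂.1 hx.2 _
        (Finset.mem_insert_of_mem (Finset.mem_image.2 ⟨m, hm', rfl⟩))
  have hdisj : Disjoint (coordset b w n) (D.image (fun m => vtx b w' (m+1))) := by
    rw [Finset.disjoint_right]
    intro τ hτ hτ'
    obtain ⟨m, hm, rfl⟩ := Finset.mem_image.1 hτ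
    have hmD := Finset.mem_sdiff.1 hm
    rcases Finset.mem_insert.1 hτ' with h | h
    · exact vtx_ne_nil w' m h
    · obtain ⟨m', hm', he⟩ := Finset.mem_image.1 h
      have : m' = m := by have := vtx_inj_depth he; omega
      subst this
      exact hmD.2 (Finset.mem_filter.2 ⟨hmD.1, he⟩)
  calc P (Gset b v w n ∩ Gset b v w' n)
      ≤ P (⋂ τ ∈ t', (fun x : V b → ℝ => x τ) ⁻¹' Sset b v τ) := measure_mono hsub
    _ = ∏ τ ∈ t', ρ (Sset b v τ) := meas_iInter_coords hP v t'
    _ = (∏ τ ∈ coordset b w n, ρ (Sset b v τ))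
          * ∏ τ ∈ D.image (fun m => vtx b w' (m+1)), ρ (Sset b v τ) := by
        rw [ht', Finset.prod_union hdisj]
    _ = ρ (Set.Ioi (1 - v)) * ρ (Set.Ici (((b:ℝ)-1)/(b:ℝ))) ^ n
          * ρ (Set.Ici (((b:ℝ)-1)/(b:ℝ))) ^ (n - (agrF b w w' n).card) := by
        congr 1
        · rw [coordset, Finset.prod_insert (nil_not_mem_image w _),
            Finset.prod_image (fun m _ m' _ h => by have := vtx_inj_depth h; omega)]
          congr 1
          exact prod_Sset_range ρ v w n
        · rw [Finset.prod_image (fun m _ m' _ h => by have := vtx_inj_depth h; omega)]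
          have hcard : D.card = n - (agrF b w w' n).card := by
            rw [hD, Finset.card_sdiff_of_subset
              (show agrF b w w' n ⊆ Finset.range n from Finset.filter_subset _ _),
              Finset.card_range]
          calc ∏ m ∈ D, ρ (Sset b v (vtx b w' (m+1)))
              = ∏ _m ∈ D, ρ (Set.Ici (((b:ℝ)-1)/(b:ℝ))) :=
                Finset.prod_congr rfl fun m _ => by rw [Sset_ne v (vtx_ne_nil w' m)]
            _ = _ := by rw [Finset.prod_const, hcard]

lemma agr_down {w w' : ℕ → Fin b} {n m k : ℕ} (hm : m ∈ agrF b w w' n) (hk : k ≤ m) :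
    k ∈ agrF b w w' n := by
  rw [agrF, Finset.mem_filter] at hm ⊢
  refine ⟨Finset.mem_range.2 (by have := Finset.mem_range.1 hm.1; omega), ?_⟩
  rw [vtx_eq_iff]
  intro i hi
  exact (vtx_eq_iff w w' (m+1)).1 hm.2 i (by omega)

lemma agr_init {w w' : ℕ → Fin b} {n j : ℕ} (h : (agrF b w w' n).card = j) :
    ∀ i < j, w i = w' i := by
  have hmem : ∀ i < j, i ∈ agrF b w w' n := by
    intro i hi
    by_contra hni
    have hsub : agrF b w w' n ⊆ Finset.range i := by
      intro m hm
      rw [Finset.mem_range]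
      by_contra hmi
      exact hni (agr_down hm (by omega))
    have := Finset.card_le_card hsub
    rw [h, Finset.card_range] at this; omega
  intro i hi
  have hmem' := hmem i hi
  rw [agrF, Finset.mem_filter] at hmem'
  exact ((vtx_eq_iff w w' (i+1)).1 hmem'.2) i (by omega)


lemma card_filter_agr_le (n j : ℕ) (w : ℕ → Fin b)
    (ext : (Fin n → Fin b) → ℕ → Fin b)
    (hext : ∀ u (i : ℕ) (h : i < n), ext u i = u ⟨i, h⟩) :
    (Finset.univ.filter
      (fun u : Fin n → Fin b => (agrF b w (ext u) n).card = j)).card ≤ b ^ (n - j) := by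
  rcases le_or_gt j n with hj | hj
  · have hinj : Set.InjOn (fun (u : Fin n → Fin b) (k : Fin (n-j)) => u ⟨j + k.1, by omega⟩)
        ↑(Finset.univ.filter
          (fun u : Fin n → Fin b => (agrF b w (ext u) n).card = j)) := by
      intro u hu u' hu' he
      rw [Finset.coe_filter, Set.mem_setOf_eq] at hu hu'
      funext i
      rcases Nat.lt_or_ge i.1 j with hij | hij
      · have h1 := agr_init hu.2 i.1 hij
        have h2 := agr_init hu'.2 i.1 hij
        have hin : i.1 < n := i.2
        rw [hext u i.1 hin] at h1
        rw [hext u' i.1 hin] at h2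
        have : (⟨i.1, hin⟩ : Fin n) = i := by apply Fin.ext; rfl
        rw [this] at h1 h2
        rw [← h1, ← h2]
      · have hk : i.1 - j < n - j := by omega
        have := congrFun he ⟨i.1 - j, hk⟩
        simp only at this
        have harg : (⟨j + (i.1 - j), by omega⟩ : Fin n) = i := by
          apply Fin.ext; simp; omega
        rwa [harg] at this
    have hcard := Finset.card_le_card_of_injOn _
      (fun u _ => Finset.mem_univ ((fun (k : Fin (n-j)) => u ⟨j + k.1, by omega⟩))) hinj
    calc (Finset.univ.filter
          (fun u : Fin n → Fin b => (agrF b w (ext u) n).card = j)).card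
        ≤ (Finset.univ : Finset (Fin (n-j) → Fin b)).card := hcard
      _ = b ^ (n - j) := by
          rw [Finset.card_univ, Fintype.card_fun, Fintype.card_fin, Fintype.card_fin]
  · have : (Finset.univ.filter
        (fun u : Fin n → Fin b => (agrF b w (ext u) n).card = j)) = ∅ := by
      apply Finset.filter_eq_empty_iff.2
      intro u _
      have := agrF_card_le w (ext u) n
      omega
    rw [this, Finset.card_empty]
    exact Nat.zero_le _

noncomputable def extF (b : ℕ) (hb0 : 0 < b) (n : ℕ) (u : Fin n → Fin b) : ℕ → Fin b :=
  fun i => if h : i < n then u ⟨i, h⟩ else ⟨0, hb0⟩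

lemma extF_lt (hb0 : 0 < b) (n : ℕ) (u : Fin n → Fin b) (i : ℕ) (h : i < n) :
    extF b hb0 n u i = u ⟨i, h⟩ := dif_pos h

def BnSet (b : ℕ) (hb0 : 0 < b) (v : ℝ) (n : ℕ) : Set (V b → ℝ) :=
  ⋃ u : Fin n → Fin b, Gset b v (extF b hb0 n u) n

lemma BnSet_meas (hb0 : 0 < b) (v : ℝ) (n : ℕ) : MeasurableSet (BnSet b hb0 v n) :=
  MeasurableSet.iUnion fun u => Gset_meas v _ n

lemma BnSet_antitone (hb0 : 0 < b) (v : ℝ) : Antitone (fun n => BnSet b hb0 v n) := by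
  apply antitone_nat_of_succ_le
  intro n x hx
  obtain ⟨u, hu⟩ := Set.mem_iUnion.1 hx
  apply Set.mem_iUnion.2
  refine ⟨fun i => u i.castSucc, ?_⟩
  rw [mem_Gset_iff] at hu ⊢
  refine ⟨hu.1, fun m hm => ?_⟩
  have hvtx : vtx b (extF b hb0 n (fun i => u i.castSucc)) (m+1)
      = vtx b (extF b hb0 (n+1) u) (m+1) := by
    rw [vtx_eq_iff]
    intro i hi
    have hin : i < n := by omega
    rw [extF_lt hb0 n _ i hin, extF_lt hb0 (n+1) u i (by omega)]
    congr 1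
  rw [hvtx]
  exact hu.2 m (by omega)

lemma meas_BnSet_ge (hb0 : 0 < b) {ρ : Measure ℝ} {P : Measure (V b → ℝ)}
    [IsProbabilityMeasure ρ] (hP : IsTreeIID b ρ P) (v : ℝ)
    (hp : ((b : ℝ≥0∞))⁻¹ < ρ (Set.Ici (((b:ℝ)-1)/(b:ℝ)))) (n : ℕ) :
    ρ (Set.Ioi (1 - v)) * (1 - ((b:ℝ≥0∞) * ρ (Set.Ici (((b:ℝ)-1)/(b:ℝ))))⁻¹)
      ≤ P (BnSet b hb0 v n) := by
  haveI : IsProbabilityMeasure P := hP.1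
  set r := ρ (Set.Ioi (1 - v)) with hrdef
  set p := ρ (Set.Ici (((b:ℝ)-1)/(b:ℝ))) with hpdef
  by_cases hr0 : r = 0
  · rw [hr0, zero_mul]; exact zero_le
  have hbne : (b:ℝ≥0∞) ≠ 0 := by
    simp only [ne_eq, Nat.cast_eq_zero]; omega
  have hbtop : (b:ℝ≥0∞) ≠ ∞ := ENNReal.natCast_ne_top b
  have hp0 : p ≠ 0 := (lt_of_le_of_lt zero_le hp).ne'
  have hp1 : p ≤ 1 := prob_le_one
  have hr1 : r ≤ 1 := prob_le_one
  have hptop : p ≠ ∞ := measure_ne_top ρ _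
  have hrtop : r ≠ ∞ := measure_ne_top ρ _
  have hbp1 : 1 < (b:ℝ≥0∞) * p := by
    calc (1:ℝ≥0∞) = (b:ℝ≥0∞) * (b:ℝ≥0∞)⁻¹ := (ENNReal.mul_inv_cancel hbne hbtop).symm
    _ < (b:ℝ≥0∞) * p := by rw [ENNReal.mul_lt_mul_iff_right hbne hbtop]; exact hp
  have hbp0 : (b:ℝ≥0∞) * p ≠ 0 := (lt_trans zero_lt_one hbp1).ne'
  have hbptop : (b:ℝ≥0∞) * p ≠ ∞ := ENNReal.mul_ne_top hbtop hptop
  set q := ((b:ℝ≥0∞) * p)⁻¹ with hqdef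
  have hq1 : q < 1 := ENNReal.inv_lt_one.2 hbp1
  have h1q0 : (1:ℝ≥0∞) - q ≠ 0 := (tsub_pos_iff_lt.2 hq1).ne'
  have h1qtop : (1:ℝ≥0∞) - q ≠ ∞ := (lt_of_le_of_lt tsub_le_self ENNReal.one_lt_top).ne
  set G : (Fin n → Fin b) → Set (V b → ℝ) := fun u => Gset b v (extF b hb0 n u) n with hG
  have hGmeas : ∀ u, MeasurableSet (G u) := fun u => Gset_meas v _ n
  set Z : (V b → ℝ) → ℝ≥0∞ :=
    fun x => ∑ u : Fin n → Fin b, (G u).indicator 1 x with hZ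
  have hZmeas : Measurable Z := by
    apply Finset.measurable_sum
    exact fun u _ => measurable_const.indicator (hGmeas u)
  -- first moment
  have hEZ : ∫⁻ x, Z x ∂P = (b:ℝ≥0∞)^n * (r * p^n) := by
    have hls := lintegral_finset_sum (μ := P) Finset.univ
      (f := fun (u : Fin n → Fin b) (x : V b → ℝ) => (G u).indicator 1 x)
      (fun u _ => measurable_const.indicator (hGmeas u))
    simp only [hZ]
    rw [hls]
    have heach : ∀ u : Fin n → Fin b, ∫⁻ x, (G u).indicator 1 x ∂P = r * p^n := by
      intro u
      rw [lintegral_indicator_one (hGmeas u)]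
      exact meas_Gset hP v _ n
    rw [Finset.sum_congr rfl (fun u _ => heach u), Finset.sum_const, Finset.card_univ,
      Fintype.card_fun, Fintype.card_fin, Fintype.card_fin, nsmul_eq_mul, Nat.cast_pow]
  -- second moment
  have hsumpair : ∀ u : Fin n → Fin b,
      ∑ u' : Fin n → Fin b, P (G u ∩ G u') ≤ r * p^n * (((b:ℝ≥0∞)*p)^n * (1-q)⁻¹) := by
    intro u
    have hstep1 : ∀ u' : Fin n → Fin b, P (G u ∩ G u') ≤
        r * p^n * p^(n - (agrF b (extF b hb0 n u) (extF b hb0 n u') n).card) :=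
      fun u' => meas_Gset_inter_le hP v _ _ n
    calc ∑ u' : Fin n → Fin b, P (G u ∩ G u')
        ≤ ∑ u' : Fin n → Fin b,
            r * p^n * p^(n - (agrF b (extF b hb0 n u) (extF b hb0 n u') n).card) :=
          Finset.sum_le_sum fun u' _ => hstep1 u'
      _ = r * p^n * ∑ u' : Fin n → Fin b,
            p^(n - (agrF b (extF b hb0 n u) (extF b hb0 n u') n).card) := by
          rw [← Finset.mul_sum]
      _ ≤ r * p^n * (((b:ℝ≥0∞)*p)^n * (1-q)⁻¹) := by
          apply mul_le_mul_right
          -- the counting bound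
          have hmaps : ∀ u' : Fin n → Fin b, u' ∈ (Finset.univ : Finset (Fin n → Fin b)) →
              (agrF b (extF b hb0 n u) (extF b hb0 n u') n).card ∈ Finset.range (n+1) := by
            intro u' _
            rw [Finset.mem_range]
            have := agrF_card_le (extF b hb0 n u) (extF b hb0 n u') n
            omega
          calc ∑ u' : Fin n → Fin b,
              p^(n - (agrF b (extF b hb0 n u) (extF b hb0 n u') n).card)
              = ∑ j ∈ Finset.range (n+1), ∑ u' ∈ Finset.univ.filter
                  (fun u' : Fin n → Fin b =>
                    (agrF b (extF b hb0 n u) (extF b hb0 n u') n).card = j),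
                  p^(n - j) :=
                (Finset.sum_fiberwise_of_maps_to' hmaps (fun j => p^(n-j))).symm
            _ ≤ ∑ j ∈ Finset.range (n+1), ((b:ℝ≥0∞)^(n-j)) * p^(n-j) := by
                apply Finset.sum_le_sum
                intro j _
                rw [Finset.sum_const, nsmul_eq_mul]
                apply mul_le_mul_left
                have hcount := card_filter_agr_le n j (extF b hb0 n u)
                  (extF b hb0 n) (fun u' i h => extF_lt hb0 n u' i h)
                calc ((Finset.univ.filter
                    (fun u' : Fin n → Fin b =>
                      (agrF b (extF b hb0 n u) (extF b hb0 n u') n).card = j)).card : ℝ≥0∞)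
                    ≤ ((b ^ (n-j) : ℕ) : ℝ≥0∞) := by exact_mod_cast hcount
                  _ = (b:ℝ≥0∞)^(n-j) := by rw [Nat.cast_pow]
            _ = ∑ j ∈ Finset.range (n+1), ((b:ℝ≥0∞)*p)^(n-j) := by
                refine Finset.sum_congr rfl fun j _ => (mul_pow _ _ _).symm
            _ = ∑ k ∈ Finset.range (n+1), ((b:ℝ≥0∞)*p)^k := by
                have := Finset.sum_range_reflect (fun k => ((b:ℝ≥0∞)*p)^k) (n+1)
                simpa using this
            _ ≤ ((b:ℝ≥0∞)*p)^n * (1-q)⁻¹ := by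
                have hterm : ∀ k ∈ Finset.range (n+1),
                    ((b:ℝ≥0∞)*p)^k = ((b:ℝ≥0∞)*p)^n * q^(n-k) := by
                  intro k hk
                  have hkn : k ≤ n := by
                    have := Finset.mem_range.1 hk; omega
                  have hsplit : ((b:ℝ≥0∞)*p)^n = ((b:ℝ≥0∞)*p)^k * ((b:ℝ≥0∞)*p)^(n-k) := by
                    rw [← pow_add]
                    congr 1
                    omega
                  rw [hqdef, ← ENNReal.inv_pow, hsplit, mul_assoc,
                    ENNReal.mul_inv_cancel (pow_ne_zero _ hbp0)
                      (ENNReal.pow_ne_top hbptop), mul_one]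
                rw [Finset.sum_congr rfl hterm, ← Finset.mul_sum]
                apply mul_le_mul_right
                calc ∑ k ∈ Finset.range (n+1), q^(n-k)
                    = ∑ k ∈ Finset.range (n+1), q^k := by
                      have := Finset.sum_range_reflect (fun k => q^k) (n+1)
                      simpa using this
                  _ ≤ ∑' k : ℕ, q^k := ENNReal.sum_le_tsum _
                  _ = (1-q)⁻¹ := ENNReal.tsum_geometric q
  have hEZ2 : ∫⁻ x, (Z x)^2 ∂P ≤
      (b:ℝ≥0∞)^n * (r * p^n * (((b:ℝ≥0∞)*p)^n * (1-q)⁻¹)) := by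
    have hZsq : ∀ x, (Z x)^2 = ∑ u : Fin n → Fin b, ∑ u' : Fin n → Fin b,
        ((G u) ∩ (G u')).indicator 1 x := by
      intro x
      rw [sq, hZ]
      rw [Finset.sum_mul_sum]
      refine Finset.sum_congr rfl fun u _ => Finset.sum_congr rfl fun u' _ => ?_
      rw [Set.inter_indicator_one]
      rfl
    calc ∫⁻ x, (Z x)^2 ∂P
        = ∑ u : Fin n → Fin b, ∑ u' : Fin n → Fin b, P (G u ∩ G u') := by
          have hls := lintegral_finset_sum (μ := P) Finset.univ
            (f := fun (u : Fin n → Fin b) (x : V b → ℝ) =>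
              ∑ u' : Fin n → Fin b, ((G u) ∩ (G u')).indicator 1 x)
            (fun u _ => Finset.measurable_sum _
              (fun u' _ => measurable_const.indicator ((hGmeas u).inter (hGmeas u'))))
          rw [lintegral_congr hZsq, hls]
          refine Finset.sum_congr rfl fun u _ => ?_
          have hls2 := lintegral_finset_sum (μ := P) Finset.univ
            (f := fun (u' : Fin n → Fin b) (x : V b → ℝ) =>
              ((G u) ∩ (G u')).indicator 1 x)
            (fun u' _ => measurable_const.indicator ((hGmeas u).inter (hGmeas u')))
          rw [hls2]
          exact Finset.sum_congr rfl fun u' _ =>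
            lintegral_indicator_one ((hGmeas u).inter (hGmeas u'))
      _ ≤ ∑ _u : Fin n → Fin b, (r * p^n * (((b:ℝ≥0∞)*p)^n * (1-q)⁻¹)) :=
          Finset.sum_le_sum fun u _ => hsumpair u
      _ = (b:ℝ≥0∞)^n * (r * p^n * (((b:ℝ≥0∞)*p)^n * (1-q)⁻¹)) := by
          rw [Finset.sum_const, Finset.card_univ, Fintype.card_fun, Fintype.card_fin,
            Fintype.card_fin, nsmul_eq_mul, Nat.cast_pow]
  -- Cauchy-Schwarz
  set B := P (BnSet b hb0 v n) with hB
  set g : (V b → ℝ) → ℝ≥0∞ := (BnSet b hb0 v n).indicator 1 with hg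
  have hZg : ∀ x, (Z * g) x = Z x := by
    intro x
    rw [Pi.mul_apply, hg]
    by_cases hx : x ∈ BnSet b hb0 v n
    · rw [Set.indicator_of_mem hx, Pi.one_apply, mul_one]
    · have hz : Z x = 0 := by
        rw [hZ]
        apply Finset.sum_eq_zero
        intro u _
        apply Set.indicator_of_notMem
        intro hxG
        exact hx (Set.mem_iUnion.2 ⟨u, hxG⟩)
      rw [hz, zero_mul]
  have hCS : (∫⁻ x, Z x ∂P)^2 ≤ (∫⁻ x, (Z x)^2 ∂P) * B := by
    have h2 : Real.HolderConjugate 2 2 := Real.HolderConjugate.two_two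
    have hgmeas : Measurable g := measurable_const.indicator (BnSet_meas hb0 v n)
    have hH := ENNReal.lintegral_mul_le_Lp_mul_Lq P h2 hZmeas.aemeasurable hgmeas.aemeasurable
    rw [lintegral_congr hZg] at hH
    have hgsq : ∫⁻ x, g x ^ (2:ℝ) ∂P = B := by
      have heq : ∀ x, g x ^ (2:ℝ) = g x := by
        intro x
        rw [hg]
        by_cases hx : x ∈ BnSet b hb0 v n
        · rw [Set.indicator_of_mem hx, Pi.one_apply, ENNReal.one_rpow]
        · rw [Set.indicator_of_notMem hx, ENNReal.zero_rpow_of_pos (by norm_num)]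
      rw [lintegral_congr heq, hg, lintegral_indicator_one (BnSet_meas hb0 v n)]
    have hZsq' : ∫⁻ x, Z x ^ (2:ℝ) ∂P = ∫⁻ x, (Z x)^2 ∂P := by
      apply lintegral_congr
      intro x
      rw [show (2:ℝ) = ((2:ℕ):ℝ) by norm_num, ENNReal.rpow_natCast]
    rw [hgsq, hZsq'] at hH
    calc (∫⁻ x, Z x ∂P)^2
        ≤ ((∫⁻ x, (Z x)^2 ∂P) ^ ((1:ℝ)/2) * B ^ ((1:ℝ)/2))^2 :=
          pow_le_pow_left₀ zero_le hH 2
      _ = (∫⁻ x, (Z x)^2 ∂P) * B := by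
          rw [mul_pow]
          congr 1
          · rw [← ENNReal.rpow_natCast ((∫⁻ x, (Z x)^2 ∂P) ^ ((1:ℝ)/2)) 2,
              ← ENNReal.rpow_mul]
            norm_num
          · rw [← ENNReal.rpow_natCast (B ^ ((1:ℝ)/2)) 2, ← ENNReal.rpow_mul]
            norm_num
  -- combine
  set C := ((b:ℝ≥0∞))^n * p^n * (((b:ℝ≥0∞))*p)^n with hC
  have hC0 : C ≠ 0 := by
    apply mul_ne_zero (mul_ne_zero (pow_ne_zero _ hbne) (pow_ne_zero _ hp0))
      (pow_ne_zero _ hbp0)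
  have hCtop : C ≠ ∞ :=
    ENNReal.mul_ne_top (ENNReal.mul_ne_top (ENNReal.pow_ne_top hbtop)
      (ENNReal.pow_ne_top hptop)) (ENNReal.pow_ne_top hbptop)
  have hrC0 : r * C ≠ 0 := mul_ne_zero hr0 hC0
  have hrCtop : r * C ≠ ∞ := ENNReal.mul_ne_top hrtop hCtop
  have h1 : (r * C) * r ≤ (r * C) * ((1-q)⁻¹ * B) := by
    calc (r * C) * r = ((b:ℝ≥0∞)^n * (r * p^n))^2 := by rw [hC]; ring
      _ ≤ (∫⁻ x, (Z x)^2 ∂P) * B := by rw [← hEZ]; exact hCS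
      _ ≤ ((b:ℝ≥0∞)^n * (r * p^n * (((b:ℝ≥0∞)*p)^n * (1-q)⁻¹))) * B :=
          mul_le_mul_left hEZ2 B
      _ = (r * C) * ((1-q)⁻¹ * B) := by rw [hC]; ring
  have h2 : r ≤ (1-q)⁻¹ * B := (ENNReal.mul_le_mul_iff_right hrC0 hrCtop).1 h1
  have h3 := mul_le_mul_right h2 ((1:ℝ≥0∞) - q)
  rw [← mul_assoc, ENNReal.mul_inv_cancel h1q0 h1qtop, one_mul] at h3
  calc r * (1 - q) = (1 - q) * r := mul_comm _ _
    _ ≤ B := h3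

end Prob

/-- if `ρ([(b-1)/b, 1]) > 1/b`, then for every `v > 1 - x_*` the avalanche
is infinite with positive probability. -/
theorem infinite_avalanche_of_supercritical_mass
    (b : ℕ) (hb : 2 ≤ b) (ρ : Measure ℝ) (hρ : IsProbabilityMeasure ρ)
    (hsupp : ρ ((Set.Icc (0 : ℝ) 1)ᶜ) = 0)
    (P : Measure (V b → ℝ)) (hP : IsTreeIID b ρ P)
    (hmass : ((b : ℝ≥0∞))⁻¹ < ρ (Set.Icc (((b : ℝ) - 1) / (b : ℝ)) 1)) :
    ∀ v : ℝ, 1 - xStar ρ < v → 0 < P {x | (avalSet b x v).Infinite} := by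
  intro v hv
  haveI : IsProbabilityMeasure ρ := hρ
  haveI : IsProbabilityMeasure P := hP.1
  have hb0 : 0 < b := by omega
  -- facts about xStar and the root mass
  have h01 : 0 < ρ (Set.Icc (0:ℝ) 1) := by
    rw [pos_iff_ne_zero]
    intro h0
    have hle : (1:ℝ≥0∞) ≤ 0 := by
      calc (1:ℝ≥0∞) = ρ Set.univ := measure_univ.symm
        _ = ρ (Set.Icc (0:ℝ) 1 ∪ (Set.Icc (0:ℝ) 1)ᶜ) := by
            rw [Set.union_compl_self]
        _ ≤ ρ (Set.Icc (0:ℝ) 1) + ρ ((Set.Icc (0:ℝ) 1)ᶜ) := measure_union_le _ _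
        _ = 0 := by rw [h0, hsupp, add_zero]
    simp at hle
  have hSSne : {y : ℝ | y ∈ Set.Icc (0 : ℝ) 1 ∧ 0 < ρ (Set.Icc y 1)}.Nonempty :=
    ⟨0, ⟨⟨le_rfl, zero_le_one⟩, h01⟩⟩
  have hxle : xStar ρ ≤ 1 := csSup_le hSSne fun y hy => hy.1.2
  have hv0 : 0 ≤ v := by
    have h := hv
    unfold xStar at h
    unfold xStar at hxle
    linarith
  have hr0 : ρ (Set.Ioi (1 - v)) ≠ 0 := by
    have h1v : 1 - v < sSup {y : ℝ | y ∈ Set.Icc (0 : ℝ) 1 ∧ 0 < ρ (Set.Icc y 1)} := by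
      have h := hv
      unfold xStar at h
      linarith
    obtain ⟨y, hySS, hy⟩ := exists_lt_of_lt_csSup hSSne h1v
    have hsub : Set.Icc y 1 ⊆ Set.Ioi (1 - v) := fun z hz => lt_of_lt_of_le hy hz.1
    exact (lt_of_lt_of_le hySS.2 (measure_mono hsub)).ne'
  have hp : ((b : ℝ≥0∞))⁻¹ < ρ (Set.Ici (((b:ℝ)-1)/(b:ℝ))) :=
    lt_of_lt_of_le hmass (measure_mono Set.Icc_subset_Ici_self)
  -- positivity of the lower bound
  have hbne : (b:ℝ≥0∞) ≠ 0 := by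
    simp only [ne_eq, Nat.cast_eq_zero]; omega
  have hbtop : (b:ℝ≥0∞) ≠ ∞ := ENNReal.natCast_ne_top b
  have hptop : ρ (Set.Ici (((b:ℝ)-1)/(b:ℝ))) ≠ ∞ := measure_ne_top ρ _
  have hbp1 : 1 < (b:ℝ≥0∞) * ρ (Set.Ici (((b:ℝ)-1)/(b:ℝ))) := by
    calc (1:ℝ≥0∞) = (b:ℝ≥0∞) * (b:ℝ≥0∞)⁻¹ := (ENNReal.mul_inv_cancel hbne hbtop).symm
      _ < _ := by rw [ENNReal.mul_lt_mul_iff_right hbne hbtop]; exact hp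
  have hq1 : ((b:ℝ≥0∞) * ρ (Set.Ici (((b:ℝ)-1)/(b:ℝ))))⁻¹ < 1 :=
    ENNReal.inv_lt_one.2 hbp1
  have h1q0 : (1:ℝ≥0∞) - ((b:ℝ≥0∞) * ρ (Set.Ici (((b:ℝ)-1)/(b:ℝ))))⁻¹ ≠ 0 :=
    (tsub_pos_iff_lt.2 hq1).ne'
  have hεpos : 0 < ρ (Set.Ioi (1-v))
      * (1 - ((b:ℝ≥0∞) * ρ (Set.Ici (((b:ℝ)-1)/(b:ℝ))))⁻¹) :=
    ENNReal.mul_pos hr0 h1q0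
  -- the decreasing intersection
  have htend := tendsto_measure_iInter_atTop (μ := P)
    (fun n => (BnSet_meas hb0 v n).nullMeasurableSet) (BnSet_antitone hb0 v)
    ⟨0, measure_ne_top P _⟩
  have hCCge : ρ (Set.Ioi (1-v))
      * (1 - ((b:ℝ≥0∞) * ρ (Set.Ici (((b:ℝ)-1)/(b:ℝ))))⁻¹)
      ≤ P (⋂ n, BnSet b hb0 v n) :=
    ge_of_tendsto' htend (fun n => meas_BnSet_ge hb0 hP v hp n)
  -- the almost sure nonnegativity event
  have hNNc : P {x : V b → ℝ | ∀ σ, 0 ≤ x σ}ᶜ = 0 := by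
    have hsub : {x : V b → ℝ | ∀ σ, 0 ≤ x σ}ᶜ ⊆
        ⋃ σ : V b, {x : V b → ℝ | x σ < 0} := by
      intro x hx
      rw [Set.mem_compl_iff, Set.mem_setOf_eq] at hx
      push_neg at hx
      obtain ⟨σ, hσ⟩ := hx
      exact Set.mem_iUnion.2 ⟨σ, hσ⟩
    have heach : ∀ σ : V b, P {x : V b → ℝ | x σ < 0} = 0 := by
      intro σ
      have hpre : {x : V b → ℝ | x σ < 0} = (fun x : V b → ℝ => x σ) ⁻¹' (Set.Iio 0) := rfl
      rw [hpre, ← Measure.map_apply (measurable_pi_apply σ) measurableSet_Iio, hP.2.2 σ]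
      have hsub2 : Set.Iio (0:ℝ) ⊆ (Set.Icc (0:ℝ) 1)ᶜ := by
        intro z hz
        simp only [Set.mem_compl_iff, Set.mem_Icc, not_and, not_le]
        intro h0
        exact absurd h0 (not_le.2 hz)
      exact le_antisymm (le_trans (measure_mono hsub2) (le_of_eq hsupp)) zero_le
    refine le_antisymm (le_trans (measure_mono hsub) ?_) zero_le
    calc P (⋃ σ : V b, {x : V b → ℝ | x σ < 0})
        ≤ ∑' σ : V b, P {x : V b → ℝ | x σ < 0} := measure_iUnion_le _
      _ = 0 := by simp [heach]
  -- the good event implies an infinite avalanche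
  have hsubInf : {x : V b → ℝ | ∀ σ, 0 ≤ x σ} ∩ (⋂ n, BnSet b hb0 v n) ⊆
      {x : V b → ℝ | (avalSet b x v).Infinite} := by
    intro x hx
    obtain ⟨hxN, hxC⟩ := hx
    apply aval_infinite hb hxN hv0
    intro n
    have hxB : x ∈ BnSet b hb0 v n := Set.mem_iInter.1 hxC n
    obtain ⟨u, hu⟩ := Set.mem_iUnion.1 hxB
    rw [mem_Gset_iff] at hu
    exact ⟨extF b hb0 n u, hu.1, hu.2⟩
  have hchain : P (⋂ n, BnSet b hb0 v n) ≤ P {x | (avalSet b x v).Infinite} := by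
    calc P (⋂ n, BnSet b hb0 v n)
        ≤ P (({x : V b → ℝ | ∀ σ, 0 ≤ x σ} ∩ (⋂ n, BnSet b hb0 v n))
            ∪ {x : V b → ℝ | ∀ σ, 0 ≤ x σ}ᶜ) := by
          apply measure_mono
          intro x hx
          by_cases hxN : x ∈ {x : V b → ℝ | ∀ σ, 0 ≤ x σ}
          · exact Or.inl ⟨hxN, hx⟩
          · exact Or.inr hxN
      _ ≤ P ({x : V b → ℝ | ∀ σ, 0 ≤ x σ} ∩ (⋂ n, BnSet b hb0 v n))
            + P {x : V b → ℝ | ∀ σ, 0 ≤ x σ}ᶜ := measure_union_le _ _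
      _ = P ({x : V b → ℝ | ∀ σ, 0 ≤ x σ} ∩ (⋂ n, BnSet b hb0 v n)) := by
          rw [hNNc, add_zero]
      _ ≤ _ := measure_mono hsubInf
  exact lt_of_lt_of_le hεpos (le_trans hCCge hchain)

end OrgCrit
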